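/- Let R be a nonnegative integrable real-valued random variable on a probability space with E[R] > 0, let W > 0, τ ∈ [0,1), T_cot > 0, T_ecca > 0, p ∈ (0,1] and integer q ≥ 1, set ζ := (τ·T_cot + ((q+1)/(2p))·T_ecca) / ((1−τ)·T_cot), and let λ* be the unique positive solution of E[(W·R − λ)^+] = ζ·λ. For every real t ≥ 0 with P(R ≥ t) > 0, define the throughput of the threshold-t policy as Λ(t) := ((1−τ)·T_cot·W·E[R·1{R ≥ t}]) / ((1−τ)·T_cot·P(R ≥ t) + τ·T_cot + ((q+1)/(2p))·T_ecca). Then Λ(t) ≤ λ* for every such t, P(R ≥ λ*/W) > 0, and Λ(λ*/W) = λ*; in particular, the supremum of Λ(t) over all thresholds t ≥ 0 with P(R ≥ t) > 0 equals λ* and is attained at t = λ*/W. -/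

import Mathlib

open MeasureTheory

/-- Optimality of the pure threshold policy with threshold `λ*/W`: if `λ*` is the (unique)
positive solution of `E[(W·R − λ)⁺] = ζ·λ` with
`ζ := (τ·T_cot + ((q+1)/(2p))·T_ecca) / ((1−τ)·T_cot)`, and the throughput of the
threshold-`t` policy is
`Λ(t) := ((1−τ)·T_cot·W·E[R·1{R ≥ t}]) / ((1−τ)·T_cot·P(R ≥ t) + τ·T_cot + ((q+1)/(2p))·T_ecca)`,
then `Λ(t) ≤ λ*` for every threshold `t ≥ 0` with `P(R ≥ t) > 0`, the threshold `λ*/W`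
satisfies `P(R ≥ λ*/W) > 0` and `Λ(λ*/W) = λ*`; in particular, `λ*` is the maximum of
`Λ` over all such thresholds. -/
theorem threshold_policy_optimal {Ω : Type*} [MeasurableSpace Ω]
    (P : Measure Ω) [IsProbabilityMeasure P]
    (R : Ω → ℝ) (hmeas : Measurable R) (hint : Integrable R P) (hpos : ∀ ω, 0 ≤ R ω)
    (hER : 0 < ∫ ω, R ω ∂P)
    (W τ Tcot Tecca p : ℝ) (q : ℕ)
    (hW : 0 < W) (hτ0 : 0 ≤ τ) (hτ1 : τ < 1) (hT : 0 < Tcot) (hE : 0 < Tecca)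
    (hp : 0 < p) (hp1 : p ≤ 1) (hq : 1 ≤ q)
    (ζ : ℝ) (hζ : ζ = (τ * Tcot + (((q : ℝ) + 1) / (2 * p)) * Tecca) / ((1 - τ) * Tcot))
    (lstar : ℝ) (hlstar : 0 < lstar)
    (hsol : ∫ ω, max (W * R ω - lstar) 0 ∂P = ζ * lstar)
    (Λ : ℝ → ℝ)
    (hΛ : ∀ t, Λ t = ((1 - τ) * Tcot * W * ∫ ω, Set.indicator {ω' | t ≤ R ω'} R ω ∂P) /
      ((1 - τ) * Tcot * (P {ω | t ≤ R ω}).toReal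
        + τ * Tcot + (((q : ℝ) + 1) / (2 * p)) * Tecca)) :
    (∀ t : ℝ, 0 ≤ t → 0 < P {ω | t ≤ R ω} → Λ t ≤ lstar) ∧
    0 < P {ω | lstar / W ≤ R ω} ∧
    Λ (lstar / W) = lstar ∧
    IsGreatest {y : ℝ | ∃ t : ℝ, 0 ≤ t ∧ 0 < P {ω | t ≤ R ω} ∧ y = Λ t} lstar := by

  have hτ' : 0 < 1 - τ := by linarith
  have ha : 0 < (1 - τ) * Tcot := mul_pos hτ' hT
  have hc : 0 < τ * Tcot + (((q : ℝ) + 1) / (2 * p)) * Tecca := by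
    have h1 : 0 < (((q : ℝ) + 1) / (2 * p)) * Tecca := by positivity
    nlinarith [mul_nonneg hτ0 hT.le]
  have hζpos : 0 < ζ := by rw [hζ]; positivity
  have hζa : ζ * ((1 - τ) * Tcot) = τ * Tcot + (((q : ℝ) + 1) / (2 * p)) * Tecca := by
    rw [hζ]; field_simp
  set g : Ω → ℝ := fun ω => W * R ω - lstar with hg_def
  have hg_int : Integrable g P := (hint.const_mul W).sub (integrable_const lstar)
  have hgp_int : Integrable (fun ω => max (g ω) 0) P := hg_int.pos_part
  have hSmeas : ∀ t : ℝ, MeasurableSet {ω | t ≤ R ω} := fun t => hmeas measurableSet_Ici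
  -- splitting of the indicator integral
  have hsplit : ∀ t : ℝ,
      ∫ ω, Set.indicator {ω' | t ≤ R ω'} g ω ∂P
        = W * (∫ ω, Set.indicator {ω' | t ≤ R ω'} R ω ∂P)
          - lstar * (P {ω | t ≤ R ω}).toReal := by
    intro t
    rw [integral_indicator (hSmeas t), integral_indicator (hSmeas t)]
    have h1 : IntegrableOn (fun ω => W * R ω) {ω | t ≤ R ω} P :=
      (hint.const_mul W).integrableOn
    have h2 : IntegrableOn (fun _ : Ω => lstar) {ω | t ≤ R ω} P :=
      (integrable_const lstar).integrableOn
    calc ∫ ω in {ω | t ≤ R ω}, g ω ∂P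
        = (∫ ω in {ω | t ≤ R ω}, W * R ω ∂P) - ∫ ω in {ω | t ≤ R ω}, lstar ∂P :=
          integral_sub h1 h2
      _ = W * (∫ ω in {ω | t ≤ R ω}, R ω ∂P) - lstar * (P {ω | t ≤ R ω}).toReal := by
          rw [integral_const_mul, setIntegral_const, smul_eq_mul, Measure.real]; ring
  -- key inequality
  have key : ∀ t : ℝ, ∫ ω, Set.indicator {ω' | t ≤ R ω'} g ω ∂P ≤ ζ * lstar := by
    intro t
    rw [← hsol]
    refine integral_mono (hg_int.indicator (hSmeas t)) hgp_int ?_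
    intro ω
    by_cases h : t ≤ R ω
    · rw [Set.indicator_of_mem (by exact h)]
      exact le_max_left _ _
    · rw [Set.indicator_of_notMem (by exact h)]
      exact le_max_right _ _
  have key2 : ∀ t : ℝ,
      W * (∫ ω, Set.indicator {ω' | t ≤ R ω'} R ω ∂P)
        - lstar * (P {ω | t ≤ R ω}).toReal ≤ ζ * lstar := by
    intro t; rw [← hsplit t]; exact key t
  -- part 1
  have part1 : ∀ t : ℝ, 0 ≤ t → 0 < P {ω | t ≤ R ω} → Λ t ≤ lstar := by
    intro t _ _
    rw [hΛ t]
    have hPS : 0 ≤ (P {ω | t ≤ R ω}).toReal := ENNReal.toReal_nonneg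
    have hden : 0 < (1 - τ) * Tcot * (P {ω | t ≤ R ω}).toReal
        + τ * Tcot + (((q : ℝ) + 1) / (2 * p)) * Tecca := by nlinarith
    rw [div_le_iff₀ hden]
    have := mul_le_mul_of_nonneg_left (key2 t) ha.le
    nlinarith [this, hζa]
  -- part 2 : positivity of the optimal threshold set
  have hpos2 : 0 < P {ω | lstar / W ≤ R ω} := by
    by_contra h
    have h0 : P {ω | lstar / W ≤ R ω} = 0 := by
      simpa using (le_antisymm (not_lt.mp h) bot_le)
    have heq0 : (fun ω => max (g ω) 0) =
        Set.indicator {ω' | lstar / W ≤ R ω'} (fun ω => max (g ω) 0) := by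
      funext ω
      by_cases h' : lstar / W ≤ R ω
      · rw [Set.indicator_of_mem (by exact h')]
      · rw [Set.indicator_of_notMem (by exact h')]
        have : R ω < lstar / W := lt_of_not_ge h'
        have hgω : g ω < 0 := by
          have := (lt_div_iff₀ hW).mp this
          simp only [hg_def]; nlinarith
        simp [max_eq_right hgω.le]
    have : ∫ ω, max (g ω) 0 ∂P = 0 := by
      rw [heq0, integral_indicator (hSmeas _), Measure.restrict_eq_zero.mpr h0,
        integral_zero_measure]
    rw [hsol] at this
    nlinarith
  -- equality of indicator and positive part at the optimal threshold
  have hind_eq : Set.indicator {ω' | lstar / W ≤ R ω'} g = fun ω => max (g ω) 0 := by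
    funext ω
    by_cases h' : lstar / W ≤ R ω
    · rw [Set.indicator_of_mem (by exact h')]
      have : lstar ≤ W * R ω := by
        have := (div_le_iff₀ hW).mp h'; nlinarith
      rw [max_eq_left]
      simp only [hg_def]; linarith
    · rw [Set.indicator_of_notMem (by exact h')]
      have : R ω < lstar / W := lt_of_not_ge h'
      have hgω : g ω < 0 := by
        have := (lt_div_iff₀ hW).mp this
        simp only [hg_def]; nlinarith
      rw [max_eq_right hgω.le]
  have hval : ∫ ω, Set.indicator {ω' | lstar / W ≤ R ω'} g ω ∂P = ζ * lstar := by
    rw [hind_eq]; exact hsol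
  have hWI : W * (∫ ω, Set.indicator {ω' | lstar / W ≤ R ω'} R ω ∂P)
      - lstar * (P {ω | lstar / W ≤ R ω}).toReal = ζ * lstar := by
    rw [← hsplit]; exact hval
  have part3 : Λ (lstar / W) = lstar := by
    rw [hΛ]
    have hPS : 0 ≤ (P {ω | lstar / W ≤ R ω}).toReal := ENNReal.toReal_nonneg
    have hden : 0 < (1 - τ) * Tcot * (P {ω | lstar / W ≤ R ω}).toReal
        + τ * Tcot + (((q : ℝ) + 1) / (2 * p)) * Tecca := by nlinarith
    rw [div_eq_iff hden.ne']
    linear_combination ((1 - τ) * Tcot) * hWI + lstar * hζa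
  refine ⟨part1, hpos2, part3, ⟨⟨lstar / W, by positivity, hpos2, part3.symm⟩, ?_⟩⟩
  rintro y ⟨t, ht, hPt, rfl⟩
  exact part1 t ht hPt
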